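/- Setup: fix finite sets B₁, C, H; for each b ∈ B₁ ∪ {∞} a nonempty finite set A_b with positive integers m_{b,a}; for each c ∈ C a finite (possibly empty) set A'_c with positive integers m'_{c,a'} and a nonempty finite set A''_c with positive integers m''_{c,a''}. Let L, L', j, f_*, f'_* be as follows: L is the free ℤ-module on I = (⊔_{b∈B₁∪{∞}} A_b) ⊔ (⊔_{c∈C} A'_c) ⊔ H, L' the free ℤ-module on I ⊔ (⊔_{c∈C} A''_c), j : L' → L the projection forgetting the A''-coordinates, (f_*α)_b = ∑_{a∈A_b} m_{b,a}α_{b,a} − ∑_{a∈A_∞} m_{∞,a}α_{∞,a} for b ∈ B₁, and f'_* : L' → ℤ^{B₁} ⊕ ℤ^{C} given by the same B₁-formula together with c-components ∑_{a'} m'_{c,a'}β_{c,a'} + ∑_{a''} m''_{c,a''}β_{c,a''} − ∑_{a∈A_∞} m_{∞,a}β_{∞,a}. Set m''(c) = gcd_{a''∈A''_c} m''_{c,a''} and m'(c) = gcd_{a'∈A'_c} m'_{c,a'} (with m'(c) = 0 if A'_c is empty). If gcd(m'(c), m''(c)) = 1 for every c ∈ C, then the quotient group T = (ker f_*)/j(ker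 f'_*) is isomorphic to G = ⊕_{c∈C} ℤ/m''(c)ℤ. In particular, if m'_{c,a'} = 1 and m''_{c,a''} = 1 for all c, a', a'', then T is the trivial group. -/
import Mathlib


open Finset

section PencilModel

variable (B₁ C H : Type) [Fintype B₁] [Fintype C] [Fintype H]
  (A : Option B₁ → Type) [∀ b, Fintype (A b)]
  (A' : C → Type) [∀ c, Fintype (A' c)]
  (A'' : C → Type) [∀ c, Fintype (A'' c)]
  (m : ∀ b, A b → ℕ) (m' : ∀ c, A' c → ℕ) (m'' : ∀ c, A'' c → ℕ)

/-- The index set of the basis of elementary loops of `L = H₁(M)`: loops around the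
curves `C_{b,a}` (`b ∈ B₁ ∪ {∞}`, `a ∈ A_b`), the curves `C'_{c,a'}` (`c ∈ C`,
`a' ∈ A'_c`) and the horizontal components (indexed by `H`). -/
abbrev Idx := (Σ b : Option B₁, A b) ⊕ ((Σ c : C, A' c) ⊕ H)

/-- The index set of the basis of elementary loops of `L' = H₁(M')`: that of `L`
together with loops around the extra deleted curves `C''_{c,a''}`. -/
abbrev Idx' := (Idx B₁ C H A A') ⊕ (Σ c : C, A'' c)

/-- The projection `j : L' → L` forgetting the `A''`-coordinates. -/
def jmap : ((Idx' B₁ C H A A' A'') → ℤ) →+ ((Idx B₁ C H A A') → ℤ) :=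
  AddMonoidHom.mk' (fun β i => β (Sum.inl i)) (fun _ _ => rfl)

/-- The map `f_* : L → ℤ^{B₁}`,
`(f_* α)_b = ∑_{a ∈ A_b} m_{b,a} α_{b,a} − ∑_{a ∈ A_∞} m_{∞,a} α_{∞,a}`. -/
def fstar : ((Idx B₁ C H A A') → ℤ) →+ (B₁ → ℤ) :=
  AddMonoidHom.mk'
    (fun α b =>
      (∑ a : A (some b), (m (some b) a : ℤ) * α (Sum.inl ⟨some b, a⟩)) -
      (∑ a : A none, (m none a : ℤ) * α (Sum.inl ⟨none, a⟩)))
    (by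
      intro x y
      funext b
      simp only [Pi.add_apply, mul_add, Finset.sum_add_distrib]
      ring)

/-- The map `f'_* : L' → ℤ^{B₁} ⊕ ℤ^{C}`, with the same `B₁`-components as `f_*` and with
`c`-component `∑_{a'} m'_{c,a'} β_{c,a'} + ∑_{a''} m''_{c,a''} β_{c,a''}
− ∑_{a ∈ A_∞} m_{∞,a} β_{∞,a}`. -/
def fstar' : ((Idx' B₁ C H A A' A'') → ℤ) →+ ((B₁ → ℤ) × (C → ℤ)) :=
  AddMonoidHom.mk'
    (fun β =>
      (fun b =>
        (∑ a : A (some b), (m (some b) a : ℤ) * β (Sum.inl (Sum.inl ⟨some b, a⟩))) -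
        (∑ a : A none, (m none a : ℤ) * β (Sum.inl (Sum.inl ⟨none, a⟩))),
       fun c =>
        (∑ a' : A' c, (m' c a' : ℤ) * β (Sum.inl (Sum.inr (Sum.inl ⟨c, a'⟩)))) +
        (∑ a'' : A'' c, (m'' c a'' : ℤ) * β (Sum.inr ⟨c, a''⟩)) -
        (∑ a : A none, (m none a : ℤ) * β (Sum.inl (Sum.inl ⟨none, a⟩)))))
    (by
      intro x y
      refine Prod.ext (funext fun b => ?_) (funext fun c => ?_) <;>
      · simp only [Prod.fst_add, Prod.snd_add, Pi.add_apply, mul_add, Finset.sum_add_distrib]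
        ring)

/-- `m''(c)`, the gcd of the multiplicities `m''_{c,a''}` over `a'' ∈ A''_c`. -/
def gcd2 (c : C) : ℕ := Finset.univ.gcd (m'' c)

/-- The map `θ : ker f_* → G = ⊕_{c ∈ C} ℤ/m''(c)ℤ` sending `α` to the element whose
`c`-coordinate is the class of
`∑_{a ∈ A_∞} m_{∞,a} α_{∞,a} − ∑_{a' ∈ A'_c} m'_{c,a'} α_{c,a'}` modulo `m''(c)`. -/
def theta : (fstar B₁ C H A A' m).ker →+ (∀ c : C, ZMod (gcd2 C A'' m'' c)) :=
  AddMonoidHom.mk'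
    (fun α c =>
      ((((∑ a : A none, (m none a : ℤ) * (α : (Idx B₁ C H A A') → ℤ) (Sum.inl ⟨none, a⟩)) -
         (∑ a' : A' c, (m' c a' : ℤ) * (α : (Idx B₁ C H A A') → ℤ) (Sum.inr (Sum.inl ⟨c, a'⟩)))) : ℤ) :
        ZMod (gcd2 C A'' m'' c)))
    (by
      intro x y
      funext c
      simp only [AddSubgroup.coe_add, Pi.add_apply, mul_add, Finset.sum_add_distrib]
      push_cast
      ring)

end PencilModel


lemma bezout_finset {ι : Type} [DecidableEq ι] (s : Finset ι) (n : ι → ℕ) :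
    ∃ x : ι → ℤ, ∑ i ∈ s, (n i : ℤ) * x i = ((s.gcd n : ℕ) : ℤ) := by
  induction s using Finset.induction with
  | empty => exact ⟨0, by simp⟩
  | @insert i s hi ih =>
    obtain ⟨x, hx⟩ := ih
    refine ⟨Function.update (fun j => (Nat.gcdB (n i) (s.gcd n)) * x j) i
      (Nat.gcdA (n i) (s.gcd n)), ?_⟩
    rw [Finset.sum_insert hi, Function.update_self, Finset.gcd_insert]
    have h1 : ∑ j ∈ s, (n j : ℤ) *
        Function.update (fun j => (Nat.gcdB (n i) (s.gcd n)) * x j) i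
          (Nat.gcdA (n i) (s.gcd n)) j
        = Nat.gcdB (n i) (s.gcd n) * ∑ j ∈ s, (n j : ℤ) * x j := by
      rw [Finset.mul_sum]
      refine Finset.sum_congr rfl fun j hj => ?_
      rw [Function.update_of_ne (by rintro rfl; exact hi hj)]
      ring
    rw [h1, hx]
    have h2 : ((GCDMonoid.gcd (n i) (s.gcd n) : ℕ) : ℤ)
        = ((Nat.gcd (n i) (s.gcd n) : ℕ) : ℤ) := rfl
    rw [h2, Nat.gcd_eq_gcd_ab]
    ring

/-- if `gcd(m'(c), m''(c)) = 1` for all `c ∈ C` (none of the bifurcation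
fibers is multiple), then `T = (ker f_*)/j(ker f'_*)` is isomorphic to
`G = ⊕_{c ∈ C} ℤ/m''(c)ℤ`; in particular if all the multiplicities `m'_{c,a'}` and
`m''_{c,a''}` are `1` (all fibers reduced), then `T` is trivial. -/
theorem stmt_13 (B₁ C H : Type) [Fintype B₁] [Fintype C] [Fintype H]
    (A : Option B₁ → Type) [∀ b, Fintype (A b)] [∀ b, Nonempty (A b)]
    (A' : C → Type) [∀ c, Fintype (A' c)]
    (A'' : C → Type) [∀ c, Fintype (A'' c)] [∀ c, Nonempty (A'' c)]
    (m : ∀ b, A b → ℕ) (hm : ∀ b a, 0 < m b a)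
    (m' : ∀ c, A' c → ℕ) (hm' : ∀ c a', 0 < m' c a')
    (m'' : ∀ c, A'' c → ℕ) (hm'' : ∀ c a'', 0 < m'' c a'')
    (hcop : ∀ c : C, Nat.gcd (Finset.univ.gcd (m' c)) (gcd2 C A'' m'' c) = 1) :
    Nonempty
      (((fstar B₁ C H A A' m).ker ⧸
          ((fstar' B₁ C H A A' A'' m m' m'').ker.map
            (jmap B₁ C H A A' A'')).addSubgroupOf (fstar B₁ C H A A' m).ker) ≃+
        (∀ c : C, ZMod (gcd2 C A'' m'' c))) ∧
    ((∀ c a', m' c a' = 1) → (∀ c a'', m'' c a'' = 1) →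
      Subsingleton
        ((fstar B₁ C H A A' m).ker ⧸
          ((fstar' B₁ C H A A' A'' m m' m'').ker.map
            (jmap B₁ C H A A' A'')).addSubgroupOf (fstar B₁ C H A A' m).ker)) := by
  classical
  -- Surjectivity of θ
  have hsurj : Function.Surjective ⇑(theta B₁ C H A A' A'' m m' m'') := by
    intro g
    -- for each c, produce A'-coefficients hitting -(g c) mod gcd2 c
    have key : ∀ c : C, ∃ X : A' c → ℤ,
        (((∑ a' : A' c, (m' c a' : ℤ) * X a') : ℤ) : ZMod (gcd2 C A'' m'' c)) = - g c := by
      intro c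
      obtain ⟨x, hx⟩ := bezout_finset (Finset.univ : Finset (A' c)) (m' c)
      obtain ⟨s, hs⟩ := ZMod.intCast_surjective (n := gcd2 C A'' m'' c) (- g c)
      set d : ℕ := Finset.univ.gcd (m' c) with hd
      set nc : ℕ := gcd2 C A'' m'' c with hnc
      refine ⟨fun a' => x a' * (Nat.gcdA d nc * s), ?_⟩
      have h1 : ∑ a' : A' c, (m' c a' : ℤ) * (x a' * (Nat.gcdA d nc * s))
          = (∑ a' : A' c, (m' c a' : ℤ) * x a') * (Nat.gcdA d nc * s) := by
        rw [Finset.sum_mul]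
        exact Finset.sum_congr rfl fun _ _ => by ring
      rw [h1, hx]
      have hb : ((Nat.gcd d nc : ℕ) : ℤ)
          = d * Nat.gcdA d nc + nc * Nat.gcdB d nc := Nat.gcd_eq_gcd_ab d nc
      rw [hcop c] at hb
      have hb2 := congrArg (Int.cast : ℤ → ZMod nc) hb
      push_cast at hb2
      rw [ZMod.natCast_self] at hb2
      rw [← hs]
      push_cast
      linear_combination (-(s : ZMod nc)) * hb2
    choose X hX using key
    -- build the element of ker f_*
    set α : Idx B₁ C H A A' → ℤ :=
      Sum.elim (fun _ => 0) (Sum.elim (fun p => X p.1 p.2) (fun _ => 0)) with hα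
    have hαker : α ∈ (fstar B₁ C H A A' m).ker := by
      rw [AddMonoidHom.mem_ker]
      funext b
      show (∑ a : A (some b), (m (some b) a : ℤ) * α (Sum.inl ⟨some b, a⟩)) -
          (∑ a : A none, (m none a : ℤ) * α (Sum.inl ⟨none, a⟩)) = 0
      rw [hα]
      simp
    refine ⟨⟨α, hαker⟩, ?_⟩
    funext c
    show (((((∑ a : A none, (m none a : ℤ) * α (Sum.inl ⟨none, a⟩)) -
         (∑ a' : A' c, (m' c a' : ℤ) * α (Sum.inr (Sum.inl ⟨c, a'⟩)))) : ℤ)) :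
        ZMod (gcd2 C A'' m'' c)) = g c
    have e1 : ∀ a : A none, α (Sum.inl ⟨none, a⟩) = 0 := fun a => rfl
    have e2 : ∀ a' : A' c, α (Sum.inr (Sum.inl ⟨c, a'⟩)) = X c a' := fun a' => rfl
    simp only [e1, e2, mul_zero, Finset.sum_const_zero, zero_sub, Int.cast_neg]
    rw [hX c, neg_neg]
  -- Kernel of θ equals the image subgroup
  have hker : (theta B₁ C H A A' A'' m m' m'').ker =
      ((fstar' B₁ C H A A' A'' m m' m'').ker.map
        (jmap B₁ C H A A' A'')).addSubgroupOf (fstar B₁ C H A A' m).ker := by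
    ext ⟨α, hα⟩
    rw [AddMonoidHom.mem_ker, AddSubgroup.mem_addSubgroupOf, AddSubgroup.mem_map]
    constructor
    · -- ker θ ⊆ image
      intro h
      have hdvd : ∀ c : C, ((gcd2 C A'' m'' c : ℕ) : ℤ) ∣
          ((∑ a : A none, (m none a : ℤ) * α (Sum.inl ⟨none, a⟩)) -
           (∑ a' : A' c, (m' c a' : ℤ) * α (Sum.inr (Sum.inl ⟨c, a'⟩)))) := by
        intro c
        rw [← ZMod.intCast_zmod_eq_zero_iff_dvd]
        exact congrFun h c
      choose k hk using fun c => (hdvd c)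
      have bez : ∀ c : C, ∃ y : A'' c → ℤ,
          ∑ a'' : A'' c, (m'' c a'' : ℤ) * y a'' = ((gcd2 C A'' m'' c : ℕ) : ℤ) :=
        fun c => bezout_finset (Finset.univ : Finset (A'' c)) (m'' c)
      choose y hy using bez
      refine ⟨Sum.elim α (fun p => k p.1 * y p.1 p.2), ?_, ?_⟩
      · rw [AddMonoidHom.mem_ker]
        have hα0 : fstar B₁ C H A A' m α = 0 := hα
        refine Prod.ext (funext fun b => ?_) (funext fun c => ?_)
        · exact congrFun hα0 b
        · show (∑ a' : A' c, (m' c a' : ℤ) * α (Sum.inr (Sum.inl ⟨c, a'⟩))) +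
            (∑ a'' : A'' c, (m'' c a'' : ℤ) * (k c * y c a'')) -
            (∑ a : A none, (m none a : ℤ) * α (Sum.inl ⟨none, a⟩)) = 0
          have h3 : ∑ a'' : A'' c, (m'' c a'' : ℤ) * (k c * y c a'')
              = k c * ∑ a'' : A'' c, (m'' c a'' : ℤ) * y c a'' := by
            rw [Finset.mul_sum]
            exact Finset.sum_congr rfl fun _ _ => by ring
          rw [h3, hy c]
          linarith [hk c]
      · rfl
    · -- image ⊆ ker θ
      rintro ⟨β, hβ, hjβ⟩
      rw [AddMonoidHom.mem_ker] at hβ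
      funext c
      show (((((∑ a : A none, (m none a : ℤ) * α (Sum.inl ⟨none, a⟩)) -
           (∑ a' : A' c, (m' c a' : ℤ) * α (Sum.inr (Sum.inl ⟨c, a'⟩)))) : ℤ)) :
          ZMod (gcd2 C A'' m'' c)) = 0
      have hβc : (∑ a' : A' c, (m' c a' : ℤ) * β (Sum.inl (Sum.inr (Sum.inl ⟨c, a'⟩)))) +
          (∑ a'' : A'' c, (m'' c a'' : ℤ) * β (Sum.inr ⟨c, a''⟩)) -
          (∑ a : A none, (m none a : ℤ) * β (Sum.inl (Sum.inl ⟨none, a⟩))) = 0 :=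
        congrFun (congrArg Prod.snd hβ) c
      have hji : ∀ i, β (Sum.inl i) = α i := fun i => congrFun hjβ i
      have hEq : (∑ a : A none, (m none a : ℤ) * α (Sum.inl ⟨none, a⟩)) -
           (∑ a' : A' c, (m' c a' : ℤ) * α (Sum.inr (Sum.inl ⟨c, a'⟩)))
           = ∑ a'' : A'' c, (m'' c a'' : ℤ) * β (Sum.inr ⟨c, a''⟩) := by
        simp only [← hji]
        linarith [hβc]
      rw [hEq]
      push_cast
      refine Finset.sum_eq_zero fun a'' _ => ?_
      have : ((m'' c a'' : ℕ) : ZMod (gcd2 C A'' m'' c)) = 0 :=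
        (ZMod.natCast_eq_zero_iff _ _).mpr
          (Finset.gcd_dvd (Finset.mem_univ a''))
      rw [this, zero_mul]
  -- assemble the equivalence
  have e : ((fstar B₁ C H A A' m).ker ⧸
      ((fstar' B₁ C H A A' A'' m m' m'').ker.map
        (jmap B₁ C H A A' A'')).addSubgroupOf (fstar B₁ C H A A' m).ker) ≃+
      (∀ c : C, ZMod (gcd2 C A'' m'' c)) :=
    (QuotientAddGroup.quotientAddEquivOfEq hker.symm).trans
      (QuotientAddGroup.quotientKerEquivOfSurjective _ hsurj)
  refine ⟨⟨e⟩, fun h1 h2 => ?_⟩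
  have hone : ∀ c : C, gcd2 C A'' m'' c = 1 := by
    intro c
    refine Nat.dvd_one.mp ?_
    have := Finset.gcd_dvd (Finset.mem_univ (Classical.arbitrary (A'' c))) (f := m'' c)
    rwa [h2 c _] at this
  haveI : ∀ c : C, Subsingleton (ZMod (gcd2 C A'' m'' c)) := by
    intro c
    rw [hone c]
    infer_instance
  exact e.toEquiv.subsingleton
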